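/- For every real number d with 0 ≤ d ≤ √3/2, the probability that the distance between a uniform point in T₁ and an independent uniform point in T₂ is at most d equals 2·(1/3 − π/(9√3))·d⁴. -/

import Mathlib

open MeasureTheory Real

noncomputable def pt (x y : ℝ) : EuclideanSpace ℝ (Fin 2) := WithLp.toLp 2 ![x, y]

/-- Uniform probability measure on a planar region `S` of area `area`. -/
noncomputable def unifOn (S : Set (EuclideanSpace ℝ (Fin 2))) (area : ℝ) :
    Measure (EuclideanSpace ℝ (Fin 2)) :=
  (ENNReal.ofReal area)⁻¹ • MeasureTheory.volume.restrict S

/-- The unit equilateral triangle with vertices (0,0), (1,0), (1/2, √3/2). -/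
noncomputable def T1 : Set (EuclideanSpace ℝ (Fin 2)) :=
  convexHull ℝ {pt 0 0, pt 1 0, pt (1/2) (Real.sqrt 3 / 2)}

/-- The diagonal unit equilateral triangle with vertices (0,0), (-1,0), (-1/2, -√3/2),
the image of `T1` under point reflection through the origin. -/
noncomputable def T2 : Set (EuclideanSpace ℝ (Fin 2)) :=
  convexHull ℝ {pt 0 0, pt (-1) 0, pt (-(1/2)) (-(Real.sqrt 3 / 2))}

lemma s3_pos : 0 < Real.sqrt 3 := Real.sqrt_pos.2 (by norm_num)
lemma s3_sq : Real.sqrt 3 ^ 2 = 3 := Real.sq_sqrt (by norm_num)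

lemma T1_subset_cone : ∀ x ∈ T1, 0 ≤ x 1 ∧ x 1 ≤ Real.sqrt 3 * x 0 := by
  intro x hx
  have hconv : Convex ℝ {y : EuclideanSpace ℝ (Fin 2) | 0 ≤ y 1 ∧ y 1 ≤ Real.sqrt 3 * y 0} := by
    have h1 : Convex ℝ {y : EuclideanSpace ℝ (Fin 2) | 0 ≤ y 1} :=
      convex_halfSpace_ge (by constructor <;> intros <;> rfl) 0
    have h2 : Convex ℝ {y : EuclideanSpace ℝ (Fin 2) | y 1 - Real.sqrt 3 * y 0 ≤ 0} :=
      convex_halfSpace_le ⟨fun a b => by simp [mul_add]; ring, fun c a => by simp; ring⟩ 0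
    have : {y : EuclideanSpace ℝ (Fin 2) | 0 ≤ y 1 ∧ y 1 ≤ Real.sqrt 3 * y 0}
        = {y | 0 ≤ y 1} ∩ {y | y 1 - Real.sqrt 3 * y 0 ≤ 0} := by
      ext y; simp [Set.mem_setOf_eq, sub_nonpos]
    rw [this]; exact h1.inter h2
  have := convexHull_min (show {pt 0 0, pt 1 0, pt (1/2) (Real.sqrt 3 / 2)} ⊆
    {y : EuclideanSpace ℝ (Fin 2) | 0 ≤ y 1 ∧ y 1 ≤ Real.sqrt 3 * y 0} from ?_) hconv hx
  · exact this
  · intro y hy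
    rcases hy with h | h | h <;> subst h <;>
        simp [pt, Set.mem_setOf_eq, Matrix.cons_val_one, Matrix.head_cons] <;>
      constructor <;> nlinarith [s3_pos]

lemma mem_T1 (x : EuclideanSpace ℝ (Fin 2)) (h1 : 0 ≤ x 1) (h2 : x 1 ≤ Real.sqrt 3 * x 0)
    (h3 : (x 0) ^ 2 + (x 1) ^ 2 ≤ 3 / 4) : x ∈ T1 := by
  set a := x 0; set b := x 1
  have ha : 0 ≤ a := by nlinarith [s3_pos]
  have hkey : Real.sqrt 3 * a + b ≤ Real.sqrt 3 := by
    nlinarith [s3_sq, s3_pos, sq_nonneg (a - Real.sqrt 3 * b), sq_nonneg (Real.sqrt 3 * a + b)]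
  set w : Fin 3 → ℝ := ![1 - a - b / Real.sqrt 3, a - b / Real.sqrt 3, 2 * b / Real.sqrt 3]
  set z : Fin 3 → EuclideanSpace ℝ (Fin 2) := ![pt 0 0, pt 1 0, pt (1/2) (Real.sqrt 3 / 2)]
  have hw0 : ∀ i ∈ Finset.univ, 0 ≤ w i := by
    intro i _
    fin_cases i <;> simp [w]
    · rw [div_le_iff₀ s3_pos] at *
      nlinarith [s3_sq, s3_pos, hkey]
    · rw [div_le_iff₀ s3_pos]
      nlinarith [s3_sq, s3_pos]
    · positivity
  have hws : ∑ i, w i = 1 := by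
    simp [w, Fin.sum_univ_three]
    field_simp
    ring
  have hz : ∀ i ∈ Finset.univ, z i ∈ ({pt 0 0, pt 1 0, pt (1/2) (Real.sqrt 3 / 2)} :
      Set (EuclideanSpace ℝ (Fin 2))) := by
    intro i _; fin_cases i <;> simp [z]
  have hmem := Finset.centerMass_mem_convexHull Finset.univ hw0 (by rw [hws]; norm_num) hz
  have hcm : Finset.univ.centerMass w z = x := by
    rw [Finset.centerMass_eq_of_sum_1 _ _ hws]
    simp [z, Fin.sum_univ_three]
    ext i
    fin_cases i <;>
      simp [pt, w, PiLp.add_apply, PiLp.smul_apply, Matrix.cons_val_zero, Matrix.cons_val_one,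
        Matrix.head_cons, smul_eq_mul] <;> field_simp <;> ring
  rwa [hcm] at hmem

lemma T2_subset_cone : ∀ x ∈ T2, 0 ≤ -x 1 ∧ -x 1 ≤ Real.sqrt 3 * -x 0 := by
  intro x hx
  have hconv : Convex ℝ {y : EuclideanSpace ℝ (Fin 2) | 0 ≤ -y 1 ∧ -y 1 ≤ Real.sqrt 3 * -y 0} := by
    have h1 : Convex ℝ {y : EuclideanSpace ℝ (Fin 2) | y 1 ≤ 0} :=
      convex_halfSpace_le (by constructor <;> intros <;> rfl) 0
    have h2 : Convex ℝ {y : EuclideanSpace ℝ (Fin 2) | -y 1 - Real.sqrt 3 * -y 0 ≤ 0} :=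
      convex_halfSpace_le ⟨fun a b => by simp [mul_add]; ring, fun c a => by simp; ring⟩ 0
    have : {y : EuclideanSpace ℝ (Fin 2) | 0 ≤ -y 1 ∧ -y 1 ≤ Real.sqrt 3 * -y 0}
        = {y | y 1 ≤ 0} ∩ {y | -y 1 - Real.sqrt 3 * -y 0 ≤ 0} := by
      ext y
      simp only [Set.mem_setOf_eq, Set.mem_inter_iff, sub_nonpos]
      constructor
      · rintro ⟨h, h'⟩; exact ⟨by linarith, h'⟩
      · rintro ⟨h, h'⟩; exact ⟨by linarith, h'⟩
    rw [this]; exact h1.inter h2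
  have := convexHull_min
    (show {pt 0 0, pt (-1) 0, pt (-(1/2)) (-(Real.sqrt 3 / 2))} ⊆
      {y : EuclideanSpace ℝ (Fin 2) | 0 ≤ -y 1 ∧ -y 1 ≤ Real.sqrt 3 * -y 0} from ?_) hconv hx
  · exact this
  · intro y hy
    rcases hy with h | h | h <;> subst h <;>
        simp [pt, Set.mem_setOf_eq, Matrix.cons_val_one, Matrix.head_cons]
    all_goals first
      | (constructor <;> nlinarith [s3_pos])
      | nlinarith [s3_pos]

lemma mem_T2 (x : EuclideanSpace ℝ (Fin 2)) (h1 : 0 ≤ -x 1) (h2 : -x 1 ≤ Real.sqrt 3 * -x 0)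
    (h3 : (x 0) ^ 2 + (x 1) ^ 2 ≤ 3 / 4) : x ∈ T2 := by
  set a := -x 0 with haDef; set b := -x 1 with hbDef
  have ha : 0 ≤ a := by nlinarith [s3_pos]
  have h3' : a ^ 2 + b ^ 2 ≤ 3 / 4 := by rw [haDef, hbDef]; nlinarith
  have hkey : Real.sqrt 3 * a + b ≤ Real.sqrt 3 := by
    have e1 : (Real.sqrt 3 * a + b) ^ 2 = 3 * a ^ 2 + 2 * (Real.sqrt 3 * (a * b)) + b ^ 2 := by
      have : (Real.sqrt 3 * a + b) ^ 2
          = Real.sqrt 3 ^ 2 * a ^ 2 + 2 * (Real.sqrt 3 * (a * b)) + b ^ 2 := by ring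
      rw [this, s3_sq]
    have e2 : (a - Real.sqrt 3 * b) ^ 2 = a ^ 2 - 2 * (Real.sqrt 3 * (a * b)) + 3 * b ^ 2 := by
      have : (a - Real.sqrt 3 * b) ^ 2
          = a ^ 2 - 2 * (Real.sqrt 3 * (a * b)) + Real.sqrt 3 ^ 2 * b ^ 2 := by ring
      rw [this, s3_sq]
    have h4 : (Real.sqrt 3 * a + b) ^ 2 ≤ 3 := by
      nlinarith [sq_nonneg (a - Real.sqrt 3 * b), e1, e2, h3']
    have h5 : 0 ≤ Real.sqrt 3 * a + b := by
      have := mul_nonneg (le_of_lt s3_pos) ha; linarith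
    nlinarith [h4, h5, s3_sq, s3_pos]
  set w : Fin 3 → ℝ := ![1 - a - b / Real.sqrt 3, a - b / Real.sqrt 3, 2 * b / Real.sqrt 3]
  set z : Fin 3 → EuclideanSpace ℝ (Fin 2) := ![pt 0 0, pt (-1) 0, pt (-(1/2)) (-(Real.sqrt 3 / 2))]
  have hw0 : ∀ i ∈ Finset.univ, 0 ≤ w i := by
    intro i _
    fin_cases i <;> simp [w]
    · rw [div_le_iff₀ s3_pos] at *
      nlinarith [s3_sq, s3_pos, hkey]
    · rw [div_le_iff₀ s3_pos]
      nlinarith [s3_sq, s3_pos]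
    · positivity
  have hws : ∑ i, w i = 1 := by
    simp [w, Fin.sum_univ_three]
    field_simp
    ring
  have hz : ∀ i ∈ Finset.univ, z i ∈ ({pt 0 0, pt (-1) 0, pt (-(1/2)) (-(Real.sqrt 3 / 2))} :
      Set (EuclideanSpace ℝ (Fin 2))) := by
    intro i _; fin_cases i <;> simp [z]
  have hmem := Finset.centerMass_mem_convexHull Finset.univ hw0 (by rw [hws]; norm_num) hz
  have hcm : Finset.univ.centerMass w z = x := by
    rw [Finset.centerMass_eq_of_sum_1 _ _ hws]
    simp [z, Fin.sum_univ_three]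
    ext i
    have ha' : x 0 = -a := by rw [haDef]; ring
    have hb' : x 1 = -b := by rw [hbDef]; ring
    fin_cases i <;>
      simp [pt, w, PiLp.add_apply, PiLp.smul_apply, Matrix.cons_val_zero, Matrix.cons_val_one,
        Matrix.head_cons, smul_eq_mul, ha', hb'] <;> field_simp <;> ring
  rwa [hcm] at hmem

noncomputable def eqv : EuclideanSpace ℝ (Fin 2) ≃ᵐ ℝ × ℝ :=
  (MeasurableEquiv.toLp 2 (Fin 2 → ℝ)).symm.trans (MeasurableEquiv.finTwoArrow)

lemma eqv_apply (x : EuclideanSpace ℝ (Fin 2)) : eqv x = (x 0, x 1) := rfl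

lemma eqv_mp : MeasurePreserving eqv volume volume :=
  (volume_preserving_finTwoArrow ℝ).comp (EuclideanSpace.volume_preserving_symm_measurableEquiv_toLp (Fin 2))

def Cone : Set (ℝ × ℝ) := {z | 0 ≤ z.2 ∧ z.2 ≤ Real.sqrt 3 * z.1}

lemma dist_le_iff_e2 (x y : EuclideanSpace ℝ (Fin 2)) (d : ℝ) (hd : 0 ≤ d) :
    dist x y ≤ d ↔ (x 0 - y 0) ^ 2 + (x 1 - y 1) ^ 2 ≤ d ^ 2 := by
  rw [EuclideanSpace.dist_eq, Real.sqrt_le_iff]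
  simp [Fin.sum_univ_two, Real.dist_eq, sq_abs, hd]

def K0 (d : ℝ) : Set ((ℝ × ℝ) × ℝ × ℝ) :=
  {q | q.1 ∈ Cone ∧ -q.2 ∈ Cone ∧ (q.1.1 - q.2.1) ^ 2 + (q.1.2 - q.2.2) ^ 2 ≤ d ^ 2}

lemma event_eq (d : ℝ) (h0 : 0 ≤ d) (h1 : d ≤ Real.sqrt 3 / 2) :
    {p : EuclideanSpace ℝ (Fin 2) × EuclideanSpace ℝ (Fin 2) | dist p.1 p.2 ≤ d} ∩ T1 ×ˢ T2
      = (Prod.map eqv eqv) ⁻¹' (K0 d) := by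
  have hd2 : d ^ 2 ≤ 3 / 4 := by nlinarith [s3_sq, s3_pos]
  ext ⟨x, y⟩
  simp only [Set.mem_inter_iff, Set.mem_setOf_eq, Set.mem_prod, Set.mem_preimage, Prod.map_apply,
    K0, eqv_apply, Cone]
  constructor
  · rintro ⟨hdist, hx, hy⟩
    obtain ⟨hb, hba⟩ := T1_subset_cone x hx
    obtain ⟨hv, hvu⟩ := T2_subset_cone y hy
    refine ⟨⟨hb, hba⟩, ⟨by simpa using hv, by simpa using hvu⟩, ?_⟩
    exact (dist_le_iff_e2 x y d h0).1 hdist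
  · rintro ⟨⟨hb, hba⟩, ⟨hv, hvu⟩, hdist⟩
    simp only [Prod.fst_neg, Prod.snd_neg] at hv hvu
    have ha : 0 ≤ x 0 := by nlinarith [s3_pos]
    have hu : 0 ≤ -(y 0) := by nlinarith [s3_pos]
    have hxb : (x 0) ^ 2 + (x 1) ^ 2 ≤ d ^ 2 := by
      nlinarith [mul_nonneg ha hu, mul_nonneg hb hv, sq_nonneg (y 0), sq_nonneg (y 1)]
    have hyb : (y 0) ^ 2 + (y 1) ^ 2 ≤ d ^ 2 := by
      nlinarith [mul_nonneg ha hu, mul_nonneg hb hv, sq_nonneg (x 0), sq_nonneg (x 1)]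
    refine ⟨(dist_le_iff_e2 x y d h0).2 hdist, mem_T1 x hb hba (by linarith),
      mem_T2 y hv (by simpa using hvu) (by linarith)⟩

lemma isClosed_Cone : IsClosed Cone := by
  have : Cone = {z : ℝ × ℝ | 0 ≤ z.2} ∩ {z | z.2 ≤ Real.sqrt 3 * z.1} := rfl
  rw [this]
  exact (isClosed_le continuous_const continuous_snd).inter
    (isClosed_le continuous_snd (continuous_const.mul continuous_fst))

def K3 (d : ℝ) : Set ((ℝ × ℝ) × ℝ × ℝ) :=
  {q | q.2 ∈ Cone ∧ q.1 - q.2 ∈ Cone ∧ q.1.1 ^ 2 + q.1.2 ^ 2 ≤ d ^ 2}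

lemma isClosed_K3 (d : ℝ) : IsClosed (K3 d) := by
  have : K3 d = ((fun q : (ℝ × ℝ) × ℝ × ℝ => q.2) ⁻¹' Cone)
      ∩ ((fun q : (ℝ × ℝ) × ℝ × ℝ => q.1 - q.2) ⁻¹' Cone)
      ∩ {q : (ℝ × ℝ) × ℝ × ℝ | q.1.1 ^ 2 + q.1.2 ^ 2 ≤ d ^ 2} := by
    ext q; simp [K3]; tauto
  rw [this]
  refine ((isClosed_Cone.preimage continuous_snd).inter
    (isClosed_Cone.preimage (continuous_fst.sub continuous_snd))).inter ?_
  exact isClosed_le (by fun_prop) continuous_const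

lemma isClosed_K0 (d : ℝ) : IsClosed (K0 d) := by
  have : K0 d = ((fun q : (ℝ × ℝ) × ℝ × ℝ => q.1) ⁻¹' Cone)
      ∩ ((fun q : (ℝ × ℝ) × ℝ × ℝ => -q.2) ⁻¹' Cone)
      ∩ {q : (ℝ × ℝ) × ℝ × ℝ |
          (q.1.1 - q.2.1) ^ 2 + (q.1.2 - q.2.2) ^ 2 ≤ d ^ 2} := by
    ext q; simp [K0]; tauto
  rw [this]
  refine ((isClosed_Cone.preimage continuous_fst).inter
    (isClosed_Cone.preimage continuous_snd.neg)).inter ?_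
  exact isClosed_le (by fun_prop) continuous_const

lemma vol_K0_eq_K3 (d : ℝ) : volume (K0 d) = volume (K3 d) := by
  have hneg : MeasurePreserving (fun q : (ℝ × ℝ) × ℝ × ℝ => (q.1, -q.2))
      (volume : Measure ((ℝ × ℝ) × ℝ × ℝ)) volume := by
    rw [Measure.volume_eq_prod]
    exact (MeasurePreserving.id volume).prod (Measure.measurePreserving_neg volume)
  have hadd : MeasurePreserving (fun q : (ℝ × ℝ) × ℝ × ℝ => (q.1, q.1 + q.2))
      (volume : Measure ((ℝ × ℝ) × ℝ × ℝ)) volume := by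
    rw [Measure.volume_eq_prod]
    exact measurePreserving_prod_add volume volume
  have hswap : MeasurePreserving (Prod.swap : (ℝ × ℝ) × ℝ × ℝ → (ℝ × ℝ) × ℝ × ℝ)
      (volume : Measure ((ℝ × ℝ) × ℝ × ℝ)) volume := by
    rw [Measure.volume_eq_prod]
    exact Measure.measurePreserving_swap
  have h1 : K0 d = (fun q : (ℝ × ℝ) × ℝ × ℝ => (q.1, -q.2)) ⁻¹'
      ((fun q : (ℝ × ℝ) × ℝ × ℝ => (q.1, q.1 + q.2)) ⁻¹' (Prod.swap ⁻¹' (K3 d))) := by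
    ext ⟨x, y⟩
    simp only [Set.mem_preimage, Set.mem_setOf_eq, K0, K3, Prod.swap_prod_mk,
      add_sub_cancel_left, Prod.fst_add, Prod.snd_add, Prod.fst_neg, Prod.snd_neg,
      ← sub_eq_add_neg, sub_sub_cancel_left, Prod.fst_sub, Prod.snd_sub]
    try tauto
  rw [h1, hneg.measure_preimage, hadd.measure_preimage, hswap.measure_preimage]
  · exact ((isClosed_K3 d).measurableSet).nullMeasurableSet
  · exact (((isClosed_K3 d).measurableSet).preimage measurable_swap).nullMeasurableSet
  · refine ((((isClosed_K3 d).measurableSet).preimage measurable_swap).preimage ?_).nullMeasurableSet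
    exact measurable_fst.prodMk (measurable_fst.add measurable_snd)

lemma slice_area (z : ℝ × ℝ) :
    volume {x : ℝ × ℝ | x ∈ Cone ∧ z - x ∈ Cone}
      = ENNReal.ofReal z.2 * ENNReal.ofReal ((Real.sqrt 3 * z.1 - z.2) / Real.sqrt 3) := by
  set w := Real.sqrt 3 * z.1 - z.2 with hw
  have hSeq : {x : ℝ × ℝ | x ∈ Cone ∧ z - x ∈ Cone}
      = {x : ℝ × ℝ | x.2 ∈ Set.Icc 0 z.2 ∧ Real.sqrt 3 * x.1 - x.2 ∈ Set.Icc 0 w} := by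
    ext x
    simp only [Set.mem_setOf_eq, Cone, Set.mem_Icc, Prod.fst_sub, Prod.snd_sub, hw]
    constructor
    · rintro ⟨⟨a1, a2⟩, b1, b2⟩
      have := mul_sub (Real.sqrt 3) z.1 x.1
      constructor
      · constructor <;> linarith
      · constructor <;> nlinarith
    · rintro ⟨⟨a1, a2⟩, b1, b2⟩
      have := mul_sub (Real.sqrt 3) z.1 x.1
      refine ⟨⟨a1, by linarith⟩, by linarith, by nlinarith⟩
  rw [hSeq]
  have hmeas : MeasurableSet {x : ℝ × ℝ | x.2 ∈ Set.Icc 0 z.2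
      ∧ Real.sqrt 3 * x.1 - x.2 ∈ Set.Icc 0 w} := by
    apply MeasurableSet.inter
    · exact measurable_snd measurableSet_Icc
    · exact ((measurable_const.mul measurable_fst).sub measurable_snd) measurableSet_Icc
  rw [Measure.volume_eq_prod, Measure.prod_apply_symm hmeas]
  have hfiber : ∀ b : ℝ, ((fun a => (a, b)) ⁻¹'
      {x : ℝ × ℝ | x.2 ∈ Set.Icc 0 z.2 ∧ Real.sqrt 3 * x.1 - x.2 ∈ Set.Icc 0 w})
      = if b ∈ Set.Icc 0 z.2 then Set.Icc (b / Real.sqrt 3) ((w + b) / Real.sqrt 3) else ∅ := by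
    intro b
    by_cases hb : b ∈ Set.Icc 0 z.2
    · rw [if_pos hb]
      ext a
      simp only [Set.mem_preimage, Set.mem_setOf_eq, Set.mem_Icc, hb, true_and]
      rw [le_div_iff₀ s3_pos, div_le_iff₀ s3_pos]
      obtain ⟨hb1, hb2⟩ := hb
      constructor
      · rintro ⟨h1, h2⟩; constructor <;> nlinarith
      · rintro ⟨h1, h2⟩
        refine ⟨⟨hb1, hb2⟩, by nlinarith, by nlinarith⟩
    · rw [if_neg hb]
      ext a
      simp only [Set.mem_preimage, Set.mem_setOf_eq, Set.mem_empty_iff_false, iff_false]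
      intro h
      exact hb h.1
  calc ∫⁻ b, volume ((fun a => (a, b)) ⁻¹'
        {x : ℝ × ℝ | x.2 ∈ Set.Icc 0 z.2 ∧ Real.sqrt 3 * x.1 - x.2 ∈ Set.Icc 0 w})
      = ∫⁻ b, (Set.Icc 0 z.2).indicator (fun _ => ENNReal.ofReal (w / Real.sqrt 3)) b := by
        apply lintegral_congr
        intro b
        rw [hfiber b]
        by_cases hb : b ∈ Set.Icc 0 z.2
        · rw [if_pos hb, Set.indicator_of_mem hb, Real.volume_Icc]
          congr 1
          field_simp
          ring
        · rw [if_neg hb, Set.indicator_of_notMem hb, measure_empty]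
    _ = ENNReal.ofReal z.2 * ENNReal.ofReal (w / Real.sqrt 3) := by
        rw [lintegral_indicator measurableSet_Icc, setLIntegral_const, Real.volume_Icc]
        rw [mul_comm]
        congr 1
        simp

lemma vol_K3 (d : ℝ) :
    volume (K3 d) = ∫⁻ z : ℝ × ℝ, ({z : ℝ × ℝ | z.1 ^ 2 + z.2 ^ 2 ≤ d ^ 2}).indicator
      (fun z => ENNReal.ofReal z.2
        * ENNReal.ofReal ((Real.sqrt 3 * z.1 - z.2) / Real.sqrt 3)) z := by
  rw [Measure.volume_eq_prod, Measure.prod_apply (isClosed_K3 d).measurableSet]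
  apply lintegral_congr
  intro z
  by_cases hz : z.1 ^ 2 + z.2 ^ 2 ≤ d ^ 2
  · have : Prod.mk z ⁻¹' (K3 d) = {x : ℝ × ℝ | x ∈ Cone ∧ z - x ∈ Cone} := by
      ext x
      simp [K3, Set.mem_setOf_eq, hz]
    rw [this, slice_area,
      Set.indicator_of_mem (show z ∈ {z : ℝ × ℝ | z.1 ^ 2 + z.2 ^ 2 ≤ d ^ 2} from hz)]
  · have : Prod.mk z ⁻¹' (K3 d) = ∅ := by
      ext x
      simp only [K3, Set.mem_setOf_eq, Set.mem_preimage, Set.mem_empty_iff_false, iff_false]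
      rintro ⟨_, _, h⟩
      exact absurd h hz
    rw [this, measure_empty,
      Set.indicator_of_notMem (show z ∉ {z : ℝ × ℝ | z.1 ^ 2 + z.2 ^ 2 ≤ d ^ 2} from hz)]

lemma angular_fun_cont : Continuous (fun θ : ℝ =>
    max (Real.sin θ) 0 * max ((Real.sqrt 3 * Real.cos θ - Real.sin θ) / Real.sqrt 3) 0) := by
  fun_prop

lemma angular_value :
    ∫ θ in (0:ℝ)..(Real.pi/3), Real.sin θ * Real.cos θ - (1 / Real.sqrt 3) * Real.sin θ ^ 2
      = 1 / 2 - Real.pi / (6 * Real.sqrt 3) := by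
  rw [intervalIntegral.integral_sub
      (((by fun_prop : Continuous fun θ : ℝ =>
        Real.sin θ * Real.cos θ)).intervalIntegrable _ _)
      (((by fun_prop : Continuous fun θ : ℝ =>
        (1 / Real.sqrt 3) * Real.sin θ ^ 2)).intervalIntegrable _ _),
    intervalIntegral.integral_const_mul, integral_sin_mul_cos₁, integral_sin_sq]
  rw [Real.sin_pi_div_three, Real.cos_pi_div_three, Real.sin_zero, Real.cos_zero]
  have h3 : Real.sqrt 3 ≠ 0 := ne_of_gt s3_pos
  field_simp
  ring_nf
  linear_combination (18 * Real.sqrt 3) * s3_sq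

lemma angular_total :
    ∫ θ in Set.Ioo (-Real.pi) Real.pi, (fun θ : ℝ =>
      max (Real.sin θ) 0 * max ((Real.sqrt 3 * Real.cos θ - Real.sin θ) / Real.sqrt 3) 0) θ
      = 1 / 2 - Real.pi / (6 * Real.sqrt 3) := by
  set h : ℝ → ℝ := fun θ =>
    max (Real.sin θ) 0 * max ((Real.sqrt 3 * Real.cos θ - Real.sin θ) / Real.sqrt 3) 0 with hh
  have hint : ∀ a b : ℝ, IntervalIntegrable h volume a b :=
    fun a b => angular_fun_cont.intervalIntegrable a b
  have hpi : (0:ℝ) < Real.pi := Real.pi_pos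
  rw [← MeasureTheory.integral_Ioc_eq_integral_Ioo,
    ← intervalIntegral.integral_of_le (by linarith : -Real.pi ≤ Real.pi)]
  have split1 : ∫ θ in (-Real.pi)..Real.pi, h θ
      = (∫ θ in (-Real.pi)..(0:ℝ), h θ) + ∫ θ in (0:ℝ)..Real.pi, h θ :=
    (intervalIntegral.integral_add_adjacent_intervals (hint _ _) (hint _ _)).symm
  have split2 : ∫ θ in (0:ℝ)..Real.pi, h θ
      = (∫ θ in (0:ℝ)..(Real.pi/3), h θ) + ∫ θ in (Real.pi/3)..Real.pi, h θ :=
    (intervalIntegral.integral_add_adjacent_intervals (hint _ _) (hint _ _)).symm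
  have hz1 : ∫ θ in (-Real.pi)..(0:ℝ), h θ = 0 := by
    rw [intervalIntegral.integral_congr (g := fun _ => (0:ℝ)) ?_, intervalIntegral.integral_zero]
    intro θ hθ
    rw [Set.uIcc_of_le (by linarith : -Real.pi ≤ (0:ℝ))] at hθ
    have : Real.sin θ ≤ 0 := Real.sin_nonpos_of_nonpos_of_neg_pi_le hθ.2 hθ.1
    simp [hh, max_eq_right this]
  have hz2 : ∫ θ in (Real.pi/3)..Real.pi, h θ = 0 := by
    rw [intervalIntegral.integral_congr (g := fun _ => (0:ℝ)) ?_, intervalIntegral.integral_zero]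
    intro θ hθ
    rw [Set.uIcc_of_le (by linarith : Real.pi/3 ≤ Real.pi)] at hθ
    have hs : 0 ≤ Real.sin (θ - Real.pi/3) := by
      apply Real.sin_nonneg_of_nonneg_of_le_pi <;> [linarith [hθ.1]; linarith [hθ.2]]
    rw [Real.sin_sub, Real.cos_pi_div_three, Real.sin_pi_div_three] at hs
    have : (Real.sqrt 3 * Real.cos θ - Real.sin θ) / Real.sqrt 3 ≤ 0 := by
      apply div_nonpos_of_nonpos_of_nonneg _ (le_of_lt s3_pos)
      linarith
    simp [hh, max_eq_right this]
  have hmid : ∫ θ in (0:ℝ)..(Real.pi/3), h θ = 1 / 2 - Real.pi / (6 * Real.sqrt 3) := by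
    rw [intervalIntegral.integral_congr
      (g := fun θ => Real.sin θ * Real.cos θ - (1 / Real.sqrt 3) * Real.sin θ ^ 2) ?_]
    · exact angular_value
    intro θ hθ
    rw [Set.uIcc_of_le (by linarith : (0:ℝ) ≤ Real.pi/3)] at hθ
    have hsin : 0 ≤ Real.sin θ :=
      Real.sin_nonneg_of_nonneg_of_le_pi hθ.1 (by linarith [hθ.2])
    have hc : 0 ≤ Real.sin (Real.pi/3 - θ) := by
      apply Real.sin_nonneg_of_nonneg_of_le_pi <;> [linarith [hθ.2]; linarith [hθ.1]]
    rw [Real.sin_sub, Real.cos_pi_div_three, Real.sin_pi_div_three] at hc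
    have h2 : 0 ≤ (Real.sqrt 3 * Real.cos θ - Real.sin θ) / Real.sqrt 3 := by
      apply div_nonneg _ (le_of_lt s3_pos)
      linarith
    have h3 : Real.sqrt 3 ≠ 0 := ne_of_gt s3_pos
    simp only [hh, max_eq_left hsin, max_eq_left h2]
    field_simp
  rw [split1, split2, hz1, hz2, hmid]
  ring

lemma disc_meas (d : ℝ) : MeasurableSet {z : ℝ × ℝ | z.1 ^ 2 + z.2 ^ 2 ≤ d ^ 2} :=
  (isClosed_le (by fun_prop) continuous_const).measurableSet

lemma disc_integral (d : ℝ) (h0 : 0 ≤ d) :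
    ∫ z in {z : ℝ × ℝ | z.1 ^ 2 + z.2 ^ 2 ≤ d ^ 2},
      (max z.2 0 * max ((Real.sqrt 3 * z.1 - z.2) / Real.sqrt 3) 0)
      = d ^ 4 / 4 * (1 / 2 - Real.pi / (6 * Real.sqrt 3)) := by
  set B := {z : ℝ × ℝ | z.1 ^ 2 + z.2 ^ 2 ≤ d ^ 2} with hB
  set g : ℝ × ℝ → ℝ := fun z => max z.2 0 * max ((Real.sqrt 3 * z.1 - z.2) / Real.sqrt 3) 0
    with hg
  rw [← MeasureTheory.integral_indicator (disc_meas d),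
    ← integral_comp_polarCoord_symm (B.indicator g)]
  have heq : Set.EqOn (fun p : ℝ × ℝ => p.1 • (B.indicator g) (polarCoord.symm p))
      (fun p : ℝ × ℝ => (Set.Ioc 0 d).indicator (fun r => r ^ 3) p.1 *
        (max (Real.sin p.2) 0 * max ((Real.sqrt 3 * Real.cos p.2 - Real.sin p.2) / Real.sqrt 3) 0))
      polarCoord.target := by
    rintro ⟨r, θ⟩ hp
    rw [polarCoord_target] at hp
    obtain ⟨hr, -⟩ := hp
    simp only [Set.mem_Ioi] at hr
    have hsymm : polarCoord.symm (r, θ) = (r * Real.cos θ, r * Real.sin θ) := rfl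
    by_cases hrd : r ≤ d
    · have hmem : polarCoord.symm (r, θ) ∈ B := by
        rw [hsymm, hB]
        simp only [Set.mem_setOf_eq]
        have : (r * Real.cos θ) ^ 2 + (r * Real.sin θ) ^ 2 = r ^ 2 := by
          have := Real.sin_sq_add_cos_sq θ; nlinarith
        rw [this]
        exact pow_le_pow_left₀ (le_of_lt hr) hrd 2 |>.trans (le_refl _)
      simp only [Set.indicator_of_mem hmem,
        Set.indicator_of_mem (show r ∈ Set.Ioc 0 d from ⟨hr, hrd⟩)]
      rw [hsymm, hg]
      simp only [smul_eq_mul]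
      have e1 : max (r * Real.sin θ) 0 = r * max (Real.sin θ) 0 := by
        rw [mul_max_of_nonneg _ _ (le_of_lt hr), mul_zero]
      have e2 : (Real.sqrt 3 * (r * Real.cos θ) - r * Real.sin θ) / Real.sqrt 3
          = r * ((Real.sqrt 3 * Real.cos θ - Real.sin θ) / Real.sqrt 3) := by
        field_simp
      rw [e1, e2]
      have e3 : max (r * ((Real.sqrt 3 * Real.cos θ - Real.sin θ) / Real.sqrt 3)) 0
          = r * max ((Real.sqrt 3 * Real.cos θ - Real.sin θ) / Real.sqrt 3) 0 := by
        rw [mul_max_of_nonneg _ _ (le_of_lt hr), mul_zero]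
      rw [e3]
      ring
    · have hmem : polarCoord.symm (r, θ) ∉ B := by
        rw [hsymm, hB]
        simp only [Set.mem_setOf_eq]
        intro hcon
        have : (r * Real.cos θ) ^ 2 + (r * Real.sin θ) ^ 2 = r ^ 2 := by
          have := Real.sin_sq_add_cos_sq θ; nlinarith
        rw [this] at hcon
        have : r ≤ d := by nlinarith
        exact hrd this
      simp only [Set.indicator_of_notMem hmem,
        Set.indicator_of_notMem (show r ∉ Set.Ioc 0 d from fun h => hrd h.2)]
      simp
  rw [MeasureTheory.setIntegral_congr_fun polarCoord.open_target.measurableSet heq]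
  rw [polarCoord_target, Measure.volume_eq_prod, ← Measure.prod_restrict,
    MeasureTheory.integral_prod_mul ((Set.Ioc (0:ℝ) d).indicator fun r => r ^ 3)
      (fun θ : ℝ => max (Real.sin θ) 0
        * max ((Real.sqrt 3 * Real.cos θ - Real.sin θ) / Real.sqrt 3) 0)]
  have hR : ∫ r in Set.Ioi (0:ℝ), (Set.Ioc 0 d).indicator (fun r => r ^ 3) r = d ^ 4 / 4 := by
    rw [MeasureTheory.setIntegral_indicator measurableSet_Ioc,
      Set.inter_eq_self_of_subset_right Set.Ioc_subset_Ioi_self,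
      ← intervalIntegral.integral_of_le h0, integral_pow]
    norm_num
  rw [hR, angular_total]

lemma ofReal_max_zero (a : ℝ) : ENNReal.ofReal (max a 0) = ENNReal.ofReal a := by
  rcases le_total a 0 with h | h
  · rw [max_eq_right h, ENNReal.ofReal_zero, ENNReal.ofReal_of_nonpos h]
  · rw [max_eq_left h]

lemma disc_compact (d : ℝ) (h0 : 0 ≤ d) :
    IsCompact {z : ℝ × ℝ | z.1 ^ 2 + z.2 ^ 2 ≤ d ^ 2} := by
  apply Metric.isCompact_of_isClosed_isBounded (isClosed_le (by fun_prop) continuous_const)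
  rw [Metric.isBounded_iff_subset_closedBall 0]
  refine ⟨d, fun z hz => ?_⟩
  simp only [Set.mem_setOf_eq] at hz
  rw [Metric.mem_closedBall, Prod.dist_eq]
  have h1 : dist z.1 0 ≤ d := by
    rw [Real.dist_eq, sub_zero]
    nlinarith [abs_nonneg z.1, sq_abs z.1, sq_nonneg z.2]
  have h2 : dist z.2 0 ≤ d := by
    rw [Real.dist_eq, sub_zero]
    nlinarith [abs_nonneg z.2, sq_abs z.2, sq_nonneg z.1]
  exact max_le h1 h2

lemma vol_K0_val (d : ℝ) (h0 : 0 ≤ d) :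
    volume (K0 d) = ENNReal.ofReal (d ^ 4 / 4 * (1 / 2 - Real.pi / (6 * Real.sqrt 3))) := by
  set B := {z : ℝ × ℝ | z.1 ^ 2 + z.2 ^ 2 ≤ d ^ 2} with hB
  set g : ℝ × ℝ → ℝ := fun z => max z.2 0 * max ((Real.sqrt 3 * z.1 - z.2) / Real.sqrt 3) 0
    with hg
  have hgcont : Continuous g := by fun_prop
  have hgnn : ∀ z, 0 ≤ g z := fun z => mul_nonneg (le_max_right _ _) (le_max_right _ _)
  rw [vol_K0_eq_K3, vol_K3]
  have step1 : ∫⁻ z : ℝ × ℝ, B.indicator (fun z => ENNReal.ofReal z.2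
      * ENNReal.ofReal ((Real.sqrt 3 * z.1 - z.2) / Real.sqrt 3)) z
      = ∫⁻ z in B, ENNReal.ofReal (g z) := by
    rw [lintegral_indicator (disc_meas d)]
    apply lintegral_congr
    intro z
    rw [hg, ENNReal.ofReal_mul (le_max_right _ _), ofReal_max_zero, ofReal_max_zero]
  rw [step1, ← MeasureTheory.ofReal_integral_eq_lintegral_ofReal
    (hgcont.continuousOn.integrableOn_compact (disc_compact d h0))
    (Filter.Eventually.of_forall fun z => hgnn z), disc_integral d h0]

lemma T1_compact : IsCompact T1 := by
  apply Set.Finite.isCompact_convexHull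
  exact (Set.finite_singleton _).insert _ |>.insert _

lemma T2_compact : IsCompact T2 := by
  apply Set.Finite.isCompact_convexHull
  exact (Set.finite_singleton _).insert _ |>.insert _

theorem cdf_diagonal_low (d : ℝ) (h0 : 0 ≤ d) (h1 : d ≤ Real.sqrt 3 / 2) :
    ((unifOn T1 (Real.sqrt 3 / 4)).prod (unifOn T2 (Real.sqrt 3 / 4)))
      {p : EuclideanSpace ℝ (Fin 2) × EuclideanSpace ℝ (Fin 2) | dist p.1 p.2 ≤ d}
      = ENNReal.ofReal
        (2 * (1 / 3 - Real.pi / (9 * Real.sqrt 3)) * d ^ 4) := by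
  set a : ℝ := Real.sqrt 3 / 4 with ha
  have hapos : 0 < a := by positivity
  set c : ENNReal := (ENNReal.ofReal a)⁻¹ with hc
  have hAne0 : ENNReal.ofReal a ≠ 0 := by
    simp [ENNReal.ofReal_eq_zero, not_le, hapos]
  have hAnetop : ENNReal.ofReal a ≠ ⊤ := ENNReal.ofReal_ne_top
  have hcnetop : c ≠ ⊤ := by
    rw [hc]
    simp [ENNReal.inv_ne_top, hAne0]
  set E := {p : EuclideanSpace ℝ (Fin 2) × EuclideanSpace ℝ (Fin 2) | dist p.1 p.2 ≤ d} with hE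
  have hEmeas : MeasurableSet E := by
    apply IsClosed.measurableSet
    exact isClosed_le (continuous_fst.dist continuous_snd) continuous_const
  haveI : IsFiniteMeasure (unifOn T2 a) := by
    constructor
    rw [unifOn, Measure.smul_apply, Measure.restrict_apply_univ, smul_eq_mul]
    exact ENNReal.mul_lt_top hcnetop.lt_top T2_compact.measure_lt_top
  have hppair : MeasurePreserving (Prod.map eqv eqv)
      (volume : Measure (EuclideanSpace ℝ (Fin 2) × EuclideanSpace ℝ (Fin 2)))
      (volume : Measure ((ℝ × ℝ) × ℝ × ℝ)) := by
    have := eqv_mp.prod eqv_mp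
    rwa [← Measure.volume_eq_prod, ← Measure.volume_eq_prod] at this
  have key : (unifOn T1 a).prod (unifOn T2 a) E
      = c * (c * volume (K0 d)) := by
    calc (unifOn T1 a).prod (unifOn T2 a) E
        = ∫⁻ x, (unifOn T2 a) (Prod.mk x ⁻¹' E) ∂(unifOn T1 a) := Measure.prod_apply hEmeas
      _ = ∫⁻ x, c * (volume.restrict T2) (Prod.mk x ⁻¹' E) ∂(unifOn T1 a) := by
          apply lintegral_congr
          intro x
          rw [unifOn, Measure.smul_apply, smul_eq_mul]
      _ = c * (c * ∫⁻ x, (volume.restrict T2) (Prod.mk x ⁻¹' E) ∂(volume.restrict T1)) := by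
          rw [unifOn, lintegral_smul_measure, lintegral_const_mul' _ _ hcnetop, smul_eq_mul]
      _ = c * (c * (volume.restrict T1).prod (volume.restrict T2) E) := by
          rw [Measure.prod_apply hEmeas]
      _ = c * (c * volume (E ∩ T1 ×ˢ T2)) := by
          rw [Measure.prod_restrict, ← Measure.volume_eq_prod, Measure.restrict_apply hEmeas]
      _ = c * (c * volume (K0 d)) := by
          rw [hE, event_eq d h0 h1,
            hppair.measure_preimage (isClosed_K0 d).measurableSet.nullMeasurableSet]
  rw [key, vol_K0_val d h0]
  have htargetnn : 0 ≤ 2 * (1 / 3 - Real.pi / (9 * Real.sqrt 3)) * d ^ 4 := by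
    have hle : Real.pi / (9 * Real.sqrt 3) ≤ 1 / 3 := by
      rw [div_le_iff₀ (by positivity)]
      nlinarith [s3_sq, s3_pos, Real.pi_le_four]
    have h4 : (0:ℝ) ≤ 2 * (1 / 3 - Real.pi / (9 * Real.sqrt 3)) := by linarith
    exact mul_nonneg h4 (pow_nonneg h0 4)
  have hval : d ^ 4 / 4 * (1 / 2 - Real.pi / (6 * Real.sqrt 3))
      = a * (a * (2 * (1 / 3 - Real.pi / (9 * Real.sqrt 3)) * d ^ 4)) := by
    rw [ha]
    have h3 : Real.sqrt 3 ≠ 0 := ne_of_gt s3_pos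
    have e1 : Real.pi / (6 * Real.sqrt 3) = Real.pi * Real.sqrt 3 / 18 := by
      rw [div_eq_div_iff (by positivity) (by norm_num)]
      linear_combination (-6 * Real.pi) * s3_sq
    have e2 : Real.pi / (9 * Real.sqrt 3) = Real.pi * Real.sqrt 3 / 27 := by
      rw [div_eq_div_iff (by positivity) (by norm_num)]
      linear_combination (-9 * Real.pi) * s3_sq
    rw [e1, e2]
    linear_combination (-d ^ 4 / 24 + Real.pi * Real.sqrt 3 * d ^ 4 / 216) * s3_sq
  rw [hval, ENNReal.ofReal_mul (le_of_lt hapos), ENNReal.ofReal_mul (le_of_lt hapos)]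
  calc c * (c * (ENNReal.ofReal a * (ENNReal.ofReal a * ENNReal.ofReal
        (2 * (1 / 3 - Real.pi / (9 * Real.sqrt 3)) * d ^ 4))))
      = (c * ENNReal.ofReal a) * ((c * ENNReal.ofReal a) * ENNReal.ofReal
        (2 * (1 / 3 - Real.pi / (9 * Real.sqrt 3)) * d ^ 4)) := by ring
    _ = ENNReal.ofReal (2 * (1 / 3 - Real.pi / (9 * Real.sqrt 3)) * d ^ 4) := by
        rw [hc, ENNReal.inv_mul_cancel hAne0 hAnetop, one_mul, one_mul]
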